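/- arXiv:1512.01514 — 3 statements merged into one kernel-verified Lean document; each statement's English description precedes it below -/
import Mathlib

section
/- Let h_m be the Heisenberg Lie algebra of dimension 2m+1 and D the derivation defined by D(x_i)=x_{i+1} (i<m), D(y_i)=-y_{i-1} (i>1), zero otherwise. Then the semidirect product n = ℝD ⋉ h_m is a nilpotent Lie algebra of dimension 2m+2 which is exactly (m+1)-step nilpotent: n^{m+1} = 0 and n^m ≠ 0. -/
noncomputable section

/-- The Heisenberg Lie algebra `h_m` of dimension `2m+1`, in `(x, y, z)`-coordinates. -/
abbrev H (m : ℕ) := (Fin m → ℝ) × (Fin m → ℝ) × ℝ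

/-- The Heisenberg bracket: `[x_i, y_i] = z`. -/
def brH {m : ℕ} (u v : H m) : H m :=
  (0, 0, ∑ i : Fin m, (u.1 i * v.2.1 i - v.1 i * u.2.1 i))

/-- The derivation `D`: `D(x_i) = x_{i+1}` (`i < m`), `D(y_i) = -y_{i-1}` (`i > 1`),
zero otherwise. -/
def D {m : ℕ} (u : H m) : H m :=
  (fun j => if 0 < (j : ℕ) then u.1 ⟨(j : ℕ) - 1, by have := j.2; omega⟩ else 0,
   fun j => if h : (j : ℕ) + 1 < m then -u.2.1 ⟨(j : ℕ) + 1, h⟩ else 0,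
   0)

/-- The semidirect product `n = ℝD ⋉ h_m`, of dimension `2m+2`. -/
abbrev N (m : ℕ) := ℝ × H m

/-- The bracket of `n = ℝD ⋉ h_m`: `[(s,u),(t,v)] = (0, sD(v) - tD(u) + [u,v])`. -/
def brN {m : ℕ} (a b : N m) : N m :=
  (0, a.1 • D b.2 - b.1 • D a.2 + brH a.2 b.2)

-- ℕ-level shift lemma
lemma nat_shift (m : ℕ) (F G : ℕ → ℝ) (hG : G m = 0) :
    ∑ i ∈ Finset.range m, (if 0 < i then F (i-1) else 0) * G i
      = ∑ i ∈ Finset.range m, F i * G (i+1) := by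
  cases m with
  | zero => simp
  | succ n =>
    rw [Finset.sum_range_succ' _ n, Finset.sum_range_succ]
    simp [hG]

-- shift lemma on Fin sums, phrased via D's x-part shape
lemma shiftA {m : ℕ} (f g : Fin m → ℝ) :
    ∑ i : Fin m, (if 0 < (i : ℕ) then f ⟨(i:ℕ) - 1, by have := i.2; omega⟩ else 0) * g i
      = ∑ i : Fin m, (if h : (i:ℕ) + 1 < m then f i * g ⟨(i:ℕ)+1, h⟩ else 0) := by
  classical
  set F : ℕ → ℝ := fun n => if h : n < m then f ⟨n, h⟩ else 0 with hF
  set G : ℕ → ℝ := fun n => if h : n < m then g ⟨n, h⟩ else 0 with hG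
  have h1 : ∑ i : Fin m, (if 0 < (i : ℕ) then f ⟨(i:ℕ) - 1, by have := i.2; omega⟩ else 0) * g i
      = ∑ n ∈ Finset.range m, (if 0 < n then F (n-1) else 0) * G n := by
    rw [Finset.sum_range]
    refine Finset.sum_congr rfl fun i _ => ?_
    have hi : (i : ℕ) < m := i.2
    have hi' : (i : ℕ) - 1 < m := by omega
    by_cases h : 0 < (i : ℕ) <;> simp [F, G, h, hi, hi']
  have h2 : ∑ i : Fin m, (if h : (i:ℕ) + 1 < m then f i * g ⟨(i:ℕ)+1, h⟩ else 0)
      = ∑ n ∈ Finset.range m, F n * G (n+1) := by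
    rw [Finset.sum_range]
    refine Finset.sum_congr rfl fun i _ => ?_
    have hi : (i : ℕ) < m := i.2
    by_cases h : (i:ℕ) + 1 < m <;> simp [F, G, h, hi]
  rw [h1, h2]
  exact nat_shift m F G (by simp [G])

lemma shift2 {m : ℕ} (u v : H m) :
    ∑ i : Fin m, v.1 i * (D u).2.1 i = -∑ i : Fin m, (D v).1 i * u.2.1 i := by
  have h1 : ∑ i : Fin m, v.1 i * (D u).2.1 i
      = -∑ i : Fin m, (if h : (i:ℕ) + 1 < m then v.1 i * u.2.1 ⟨(i:ℕ)+1, h⟩ else 0) := by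
    rw [← Finset.sum_neg_distrib]
    refine Finset.sum_congr rfl fun i _ => ?_
    simp only [D]
    by_cases h : (i:ℕ) + 1 < m <;> simp [h]
  rw [h1, ← shiftA v.1 u.2.1]
  simp [D]

lemma keyL {m : ℕ} (u v : H m) : (brH (D u) v).2.2 = (brH (D v) u).2.2 := by
  simp only [brH]
  rw [Finset.sum_sub_distrib, Finset.sum_sub_distrib, shift2 u v, shift2 v u]
  ring

lemma brN_z {m : ℕ} (u v : N m) : (brN u v).2.2.2 = (brH u.2 v.2).2.2 := by
  simp [brN, D]

lemma brH_expand {m : ℕ} (a b : N m) (w : H m) :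
    (brH (brN a b).2 w).2.2 = a.1 * (brH (D b.2) w).2.2 - b.1 * (brH (D a.2) w).2.2 := by
  simp only [brH, brN, Finset.mul_sum, ← Finset.sum_sub_distrib]
  refine Finset.sum_congr rfl fun i _ => ?_
  simp
  ring

lemma jacobi {m : ℕ} (a b c : N m) :
    brN (brN a b) c + brN (brN b c) a + brN (brN c a) b = 0 := by
  refine Prod.ext ?_ (Prod.ext ?_ (Prod.ext ?_ ?_))
  · simp [brN]
  · funext j
    simp [brN, brH, D]
    split_ifs <;> ring
  · funext j
    simp [brN, brH, D]
    split_ifs <;> ring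
  · have e : (brN (brN a b) c + brN (brN b c) a + brN (brN c a) b).2.2.2
        = (brN (brN a b) c).2.2.2 + (brN (brN b c) a).2.2.2 + (brN (brN c a) b).2.2.2 := by
      simp
    rw [e, brN_z, brN_z, brN_z, brH_expand, brH_expand, brH_expand]
    show _ = (0:ℝ)
    linear_combination a.1 * (keyL b.2 c.2) + b.1 * (keyL c.2 a.2) + c.1 * (keyL a.2 b.2)

/-- Lower central series of a bracket. -/
def lcs {m : ℕ} (μ : N m → N m → N m) : ℕ → Submodule ℝ (N m)
  | 0 => ⊤
  | j + 1 => Submodule.span ℝ {w | ∃ u ∈ lcs μ j, ∃ v, w = μ u v}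

def U (m j : ℕ) : Submodule ℝ (N m) where
  carrier := {w | w.1 = 0 ∧ (∀ i : Fin m, (i : ℕ) < j → w.2.1 i = 0) ∧
      (∀ i : Fin m, m ≤ (i : ℕ) + j → w.2.2.1 i = 0)}
  add_mem' := by
    rintro a b ⟨h1, h2, h3⟩ ⟨g1, g2, g3⟩
    exact ⟨by simp [h1, g1], fun i hi => by simp [h2 i hi, g2 i hi],
      fun i hi => by simp [h3 i hi, g3 i hi]⟩
  zero_mem' := by simp
  smul_mem' := by
    rintro r a ⟨h1, h2, h3⟩
    exact ⟨by simp [h1], fun i hi => by simp [h2 i hi], fun i hi => by simp [h3 i hi]⟩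

lemma mem_U {m j : ℕ} {w : N m} :
    w ∈ U m j ↔ w.1 = 0 ∧ (∀ i : Fin m, (i : ℕ) < j → w.2.1 i = 0) ∧
      (∀ i : Fin m, m ≤ (i : ℕ) + j → w.2.2.1 i = 0) := Iff.rfl

lemma br_mem_U1 {m : ℕ} (u v : N m) : brN u v ∈ U m 1 := by
  refine ⟨rfl, fun i hi => ?_, fun i hi => ?_⟩
  · have h0 : (i : ℕ) = 0 := by omega
    simp [brN, brH, D, h0]
  · have h0 : ¬ ((i : ℕ) + 1 < m) := by have := i.2; omega
    simp [brN, brH, D, h0]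

lemma br_mem_U {m j : ℕ} {u : N m} (hu : u ∈ U m j) (v : N m) : brN u v ∈ U m (j + 1) := by
  obtain ⟨h1, h2, h3⟩ := hu
  refine ⟨rfl, fun i hi => ?_, fun i hi => ?_⟩
  · simp only [brN, brH, D, h1]
    by_cases h : 0 < (i : ℕ)
    · have hx : u.2.1 ⟨(i : ℕ) - 1, by have := i.2; omega⟩ = 0 :=
        h2 ⟨(i : ℕ) - 1, by have := i.2; omega⟩ (by simp; omega)
      simp [h, hx]
    · simp [h]
  · simp only [brN, brH, D, h1]
    by_cases h : (i : ℕ) + 1 < m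
    · have hy : u.2.2.1 ⟨(i : ℕ) + 1, h⟩ = 0 := h3 ⟨(i : ℕ) + 1, h⟩ (by simp; omega)
      simp [h, hy]
    · simp [h]

lemma lcs_le_U (m : ℕ) : ∀ j, lcs (brN : N m → N m → N m) (j + 1) ≤ U m (j + 1) := by
  intro j
  induction j with
  | zero =>
    rw [lcs]
    refine Submodule.span_le.mpr ?_
    rintro w ⟨u, _, v, rfl⟩
    exact br_mem_U1 u v
  | succ n ih =>
    rw [lcs]
    refine Submodule.span_le.mpr ?_
    rintro w ⟨u, hu, v, rfl⟩
    exact br_mem_U (ih hu) v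

lemma lcs_top_bot (m : ℕ) (hm : 1 ≤ m) : lcs (brN : N m → N m → N m) (m + 1) = ⊥ := by
  obtain ⟨k, rfl⟩ : ∃ k, m = k + 1 := ⟨m - 1, by omega⟩
  rw [lcs]
  refine le_bot_iff.mp (Submodule.span_le.mpr ?_)
  rintro w ⟨u, hu, v, rfl⟩
  obtain ⟨h1, h2, h3⟩ := lcs_le_U _ k hu
  have hx : u.2.1 = 0 := funext fun i => h2 i i.2
  have hy : u.2.2.1 = 0 := funext fun i => h3 i (by omega)
  have hD : D u.2 = 0 := by
    refine Prod.ext ?_ (Prod.ext ?_ ?_) <;> simp [D, hx, hy] <;> funext j <;> simp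
  have hB : brH u.2 v.2 = 0 := by
    simp [brH, hx, hy]
  simp only [SetLike.mem_coe, Submodule.mem_bot]
  simp [brN, h1, hD, hB]

def X (m k : ℕ) : N m := (0, fun i => if (i : ℕ) = k then 1 else 0, 0, 0)

lemma X_eq {m n : ℕ} (h : n + 1 < m) :
    X m (n + 1) = brN (X m n) ((-1 : ℝ), 0, 0, 0) := by
  refine Prod.ext ?_ (Prod.ext ?_ (Prod.ext ?_ ?_))
  · simp [X, brN]
  · funext j
    simp [X, brN, brH, D]
    split_ifs <;> first | rfl | omega | norm_num | (exfalso; omega)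
  · funext j
    simp [X, brN, brH, D]
  · simp [X, brN, brH, D]

lemma X_mem (m : ℕ) : ∀ k, k < m → X m k ∈ lcs (brN : N m → N m → N m) k := by
  intro k
  induction k with
  | zero => intro _; trivial
  | succ n ih =>
    intro h
    rw [lcs]
    exact Submodule.subset_span ⟨X m n, ih (by omega), ((-1 : ℝ), 0, 0, 0), X_eq h⟩

lemma z_mem (m : ℕ) (hm : 1 ≤ m) :
    ((0 : ℝ), (0 : Fin m → ℝ), (0 : Fin m → ℝ), (1 : ℝ)) ∈ lcs (brN : N m → N m → N m) m := by
  obtain ⟨k, rfl⟩ : ∃ k, m = k + 1 := ⟨m - 1, by omega⟩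
  rw [lcs]
  refine Submodule.subset_span ⟨X (k+1) k, X_mem _ k (by omega),
    ((0 : ℝ), (0 : Fin (k+1) → ℝ), (fun i => if (i : ℕ) = k then 1 else 0), (0 : ℝ)), ?_⟩
  refine Prod.ext ?_ (Prod.ext ?_ (Prod.ext ?_ ?_))
  · simp [X, brN]
  · funext j; simp [X, brN, brH, D]
  · funext j; simp [X, brN, brH, D]
  · rw [brN_z]
    simp only [X, brH]
    rw [Finset.sum_eq_single (⟨k, Nat.lt_succ_self k⟩ : Fin (k+1))]
    · simp
    · intro b _ hb
      have hbk : (b : ℕ) ≠ k := fun hc => hb (Fin.ext hc)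
      simp [hbk]
    · simp

/-- `n = ℝD ⋉ h_m` is a nilpotent Lie algebra of dimension `2m+2` that is exactly
`(m+1)`-step nilpotent: `n^{m+1} = 0` and `n^m ≠ 0`. -/
theorem semidirect_product_exactly_m_plus_one_step (m : ℕ) (hm : 1 ≤ m) :
    (∀ a b c : N m, brN (brN a b) c + brN (brN b c) a + brN (brN c a) b = 0) ∧
    Module.finrank ℝ (N m) = 2 * m + 2 ∧
    lcs (brN : N m → N m → N m) (m + 1) = ⊥ ∧
    lcs (brN : N m → N m → N m) m ≠ ⊥ := by
  refine ⟨jacobi, ?_, lcs_top_bot m hm, ?_⟩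
  · simp [N, H, Module.finrank_prod, Module.finrank_pi, Module.finrank_self]
    ring
  · intro hb
    have hz := z_mem m hm
    rw [hb, Submodule.mem_bot] at hz
    exact one_ne_zero (congrArg (fun w : N m => w.2.2.2) hz)
end
end

section
/- For m ≥ 2, the (m+1)-step nilpotent Lie algebra n = ℝD ⋉ h_m of dimension 2m+2 does not satisfy the identity SN_m = 0; i.e., there exist elements u1,...,u_{m+1} in n with [[u1,u2], N_{m-2}(u3,...,u_{m+1})] ≠ 0. Consequently N_{2(m+1),m+1} ⊄ SN_{2(m+1),m}. -/
noncomputable section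

/-- Left-normed brackets for `brN`: `N_0(x_0) = x_0`,
`N_{j+1}(x_0,…,x_{j+1}) = [N_j(x_0,…,x_j), x_{j+1}]`. -/
def leftNormed {m : ℕ} : ℕ → (ℕ → N m) → N m
  | 0, x => x 0
  | j + 1, x => brN (leftNormed j x) (x (j + 1))

lemma key (m : ℕ) (hm : 0 < m) (k : ℕ) (hk : k < m) :
    leftNormed k (fun i => if i = 0 then ((0 : ℝ), ((Pi.single (⟨0, hm⟩ : Fin m) 1 : Fin m → ℝ), 0, 0)) else ((1:ℝ),(0,0,0))) =
      (0, ((-1:ℝ)^k • (Pi.single (⟨k, hk⟩ : Fin m) 1 : Fin m → ℝ), 0, 0)) := by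
  induction k with
  | zero => simp [leftNormed]
  | succ k ih =>
    have hk' : k < m := by omega
    rw [leftNormed, ih hk']
    refine Prod.ext rfl (Prod.ext ?_ (Prod.ext ?_ ?_))
    · funext j
      simp only [brN, brH, D]
      simp only [Prod.fst_add, Prod.fst_sub, Prod.smul_fst, Prod.snd_zero, Prod.fst_zero,
        Pi.add_apply, Pi.sub_apply, Pi.smul_apply, Pi.zero_apply, smul_eq_mul]
      simp [Pi.single_apply, Fin.ext_iff]
      split_ifs <;> first | ring1 | (exfalso; omega)
    · funext j
      simp only [brN, brH, D]
      simp
    · simp [brN, brH, D]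

/-- For `m ≥ 2`, the `(m+1)`-step nilpotent Lie algebra `n = ℝD ⋉ h_m` does not satisfy
the identity `SN_m = 0`: there exist `u_1, …, u_{m+1}` with
`[[u_1,u_2], N_{m-2}(u_3,…,u_{m+1})] ≠ 0`. -/
theorem semidirect_product_not_SN (m : ℕ) (hm : 2 ≤ m) :
    ∃ x : ℕ → N m,
      brN (brN (x 0) (x 1)) (leftNormed (m - 2) (fun i => x (i + 2))) ≠ 0 := by
  have hm0 : 0 < m := by omega
  have h1 : m - 1 < m := by omega
  have h2 : m - 2 < m := by omega
  refine ⟨fun i => if i = 0 then ((1:ℝ),(0,0,0))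
    else if i = 1 then ((0:ℝ),(0, Pi.single (⟨m-1,h1⟩:Fin m) 1, 0))
    else if i = 2 then ((0:ℝ),((Pi.single (⟨0,hm0⟩:Fin m) 1 : Fin m → ℝ),0,0))
    else ((1:ℝ),(0,0,0)), ?_⟩
  have hfun : (fun i => (fun i => if i = 0 then ((1:ℝ),((0:Fin m → ℝ),(0:Fin m → ℝ),(0:ℝ)))
      else if i = 1 then ((0:ℝ),(0, Pi.single (⟨m-1,h1⟩:Fin m) 1, 0))
      else if i = 2 then ((0:ℝ),((Pi.single (⟨0,hm0⟩:Fin m) 1 : Fin m → ℝ),0,0))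
      else ((1:ℝ),(0,0,0))) (i + 2)) =
      (fun i => if i = 0 then ((0 : ℝ), ((Pi.single (⟨0, hm0⟩ : Fin m) 1 : Fin m → ℝ), 0, 0)) else ((1:ℝ),(0,0,0))) := by
    funext i
    rcases i with _|i <;> simp
  rw [hfun, key m hm0 (m-2) h2]
  norm_num
  intro h
  have hz := congrArg (fun p : N m => p.2.2.2) h
  simp only [brN, brH, D] at hz
  norm_num at hz
  have hzz : (-(-1:ℝ)^(m-2)) = 0 := by
    rw [← hz, Finset.sum_eq_single (⟨m-2,h2⟩ : Fin m)]
    · have hlt : m - 2 + 1 < m := by omega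
      rw [dif_pos hlt]
      have e2 : (⟨m-2+1,hlt⟩ : Fin m) = ⟨m-1,h1⟩ := by simp [Fin.ext_iff]; omega
      rw [e2, Pi.single_eq_same, Pi.single_eq_same]; ring
    · intro b _ hb
      split_ifs <;> simp [Pi.single_eq_of_ne hb]
    · simp
  revert hzz
  simp
end
end

section
/- Let g(t) be the 7-dimensional Lie algebra with brackets ab=e, ad=f, af=g, bc=f, bd=g, cd=−t²e, ce=−g. For t ≠ 0, the change of basis {ta+c, 2t(tb−d), −ta+c, −2t(tb+d), 4t²(te−f), 4t²(te+f), −8t³g} transforms g(t) into g_{137B} (brackets ab=e, ae=g, cd=f, cf=g, bd=g); i.e., g(t) ≅ g_{137B} for all t ≠ 0. -/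
noncomputable section

/-- Standard basis vector of `ℝ⁷`. -/
def e (k : Fin 7) : Fin 7 → ℝ := Pi.single k 1

/-- Structure constants of `g(t)`: `ab=e, ad=f, af=g, bc=f, bd=g, cd=−t²e, ce=−g`
(basis `a,…,g = e 0,…,e 6`), extended antisymmetrically. -/
def tblT (t : ℝ) : Fin 7 → Fin 7 → Fin 7 → ℝ :=
  ![![0, e 4, 0, e 5, 0, e 6, 0],
    ![-e 4, 0, e 5, e 6, 0, 0, 0],
    ![0, -e 5, 0, -(t ^ 2) • e 4, -e 6, 0, 0],
    ![-e 5, -e 6, (t ^ 2) • e 4, 0, 0, 0, 0],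
    ![0, 0, e 6, 0, 0, 0, 0],
    ![-e 6, 0, 0, 0, 0, 0, 0],
    ![0, 0, 0, 0, 0, 0, 0]]

/-- The bracket of `g(t)`. -/
def brT (t : ℝ) (x y : Fin 7 → ℝ) : Fin 7 → ℝ :=
  ∑ p : Fin 7, ∑ q : Fin 7, (x p * y q) • tblT t p q

/-- Structure constants of `g_{137B}`: `ab=e, ae=g, cd=f, cf=g, bd=g`. -/
def tblB : Fin 7 → Fin 7 → Fin 7 → ℝ :=
  ![![0, e 4, 0, 0, e 6, 0, 0],
    ![-e 4, 0, 0, e 6, 0, 0, 0],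
    ![0, 0, 0, e 5, 0, e 6, 0],
    ![0, -e 6, -e 5, 0, 0, 0, 0],
    ![-e 6, 0, 0, 0, 0, 0, 0],
    ![0, 0, -e 6, 0, 0, 0, 0],
    ![0, 0, 0, 0, 0, 0, 0]]

/-- The bracket of `g_{137B}`. -/
def brB (x y : Fin 7 → ℝ) : Fin 7 → ℝ :=
  ∑ p : Fin 7, ∑ q : Fin 7, (x p * y q) • tblB p q

/-- The new basis `{ta+c, 2t(tb−d), −ta+c, −2t(tb+d), 4t²(te−f), 4t²(te+f), −8t³g}`
of `g(t)`. -/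
def T (t : ℝ) : Fin 7 → (Fin 7 → ℝ) :=
  ![t • e 0 + e 2,
    (2 * t ^ 2) • e 1 - (2 * t) • e 3,
    -(t • e 0) + e 2,
    -((2 * t ^ 2) • e 1) - (2 * t) • e 3,
    (4 * t ^ 3) • e 4 - (4 * t ^ 2) • e 5,
    (4 * t ^ 3) • e 4 + (4 * t ^ 2) • e 5,
    -((8 * t ^ 3) • e 6)]

/-- The change-of-basis map. -/
def L (t : ℝ) (x : Fin 7 → ℝ) : Fin 7 → ℝ := ∑ i : Fin 7, x i • T t i

def Linv (t : ℝ) (y : Fin 7 → ℝ) : Fin 7 → ℝ :=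
  ![(y 0 / t + y 2) / 2,
    (y 1 / (2 * t ^ 2) - y 3 / (2 * t)) / 2,
    (y 2 - y 0 / t) / 2,
    (-(y 1 / (2 * t ^ 2)) - y 3 / (2 * t)) / 2,
    (y 4 / (4 * t ^ 3) - y 5 / (4 * t ^ 2)) / 2,
    (y 4 / (4 * t ^ 3) + y 5 / (4 * t ^ 2)) / 2,
    -(y 6 / (8 * t ^ 3))]

@[simp] lemma cv7_5 {α : Type*} (x : α) (u : Fin 6 → α) :
    Matrix.vecCons x u (5 : Fin 7) = u 4 := rfl
@[simp] lemma cv7_6 {α : Type*} (x : α) (u : Fin 6 → α) :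
    Matrix.vecCons x u (6 : Fin 7) = u 5 := rfl
@[simp] lemma cv6_5 {α : Type*} (x : α) (u : Fin 5 → α) :
    Matrix.vecCons x u (5 : Fin 6) = u 4 := rfl
@[simp] lemma vh_const {α : Type*} {m : ℕ} (c : α) :
    Matrix.vecHead (fun _ : Fin (m + 1) => c) = c := rfl
@[simp] lemma vt_const {α : Type*} {m : ℕ} (c : α) :
    Matrix.vecTail (fun _ : Fin (m + 1) => c) = fun _ => c := rfl

set_option maxHeartbeats 2000000 in
/-- For `t ≠ 0`, the change of basis `T t` transforms `g(t)` into `g_{137B}`;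
i.e. `g(t) ≅ g_{137B}` for all `t ≠ 0`. -/
theorem gt_isomorphic_g137B (t : ℝ) (ht : t ≠ 0) :
    Function.Bijective (L t) ∧
    ∀ x y : Fin 7 → ℝ, brT t (L t x) (L t y) = L t (brB x y) := by
  constructor
  · have hli : Function.LeftInverse (Linv t) (L t) := by
      intro x
      funext k
      fin_cases k <;>
        simp [L, Linv, T, e, Fin.sum_univ_seven, Pi.single_apply] <;>
        field_simp <;> ring
    have hri : Function.RightInverse (Linv t) (L t) := by
      intro y
      funext k
      fin_cases k <;>
        simp [L, Linv, T, e, Fin.sum_univ_seven, Pi.single_apply] <;>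
        field_simp <;> ring
    exact ⟨hli.injective, hri.surjective⟩
  · intro x y
    funext k
    fin_cases k <;>
      simp [brT, brB, L, T, tblT, tblB, e, Fin.sum_univ_seven, Pi.single_apply] <;>
      ring
end
end
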